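/- Let ĥ be a homeomorphism of the vertical annulus A = (ℝ/ℤ) × ℝ which commutes with the vertical integer translations (ĥ(ŵ + (0,p)) = ĥ(ŵ) + (0,p) for all p ∈ ℤ). Suppose there is a compact connected set K ⊂ A with ĥ(K) = K which separates the two ends of A, i.e. K ⊂ (ℝ/ℤ) × [−M₀, M₀] for some M₀ > 0 and the two components of A ∖ K containing (ℝ/ℤ) × (M₀, ∞) and (ℝ/ℤ) × (−∞, −M₀) are distinct. Then there exists M′ > 0 such that |pr₂(ĥⁿ(ŵ) − ŵ)| < M′ for all ŵ ∈ A and all n ∈ ℤ. -/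

import Mathlib

open Filter Topology Set

noncomputable section

/-- Group structure on the group of self-homeomorphisms of a topological space,
so that `f ^ n` denotes the `n`-th iterate (with `n : ℕ` or `n : ℤ`). -/
instance Homeomorph.instGroupSelf {X : Type*} [TopologicalSpace X] : Group (X ≃ₜ X) where
  mul f g := g.trans f
  one := Homeomorph.refl X
  inv := Homeomorph.symm
  mul_assoc f g h := Homeomorph.ext fun _ => rfl
  one_mul f := Homeomorph.ext fun _ => rfl
  mul_one f := Homeomorph.ext fun _ => rfl
  inv_mul_cancel f := Homeomorph.ext fun x => f.symm_apply_apply x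

/-- The two-torus `T² = ℝ²/ℤ²`. -/
abbrev Torus : Type := AddCircle (1 : ℝ) × AddCircle (1 : ℝ)

/-- The vertical annulus `A = (ℝ/ℤ) × ℝ`. -/
abbrev VertAnnulus : Type := AddCircle (1 : ℝ) × ℝ

/-- The canonical covering projection `ℝ² → T²`. -/
def torusProj : ℝ × ℝ → Torus :=
  fun p => ((p.1 : AddCircle (1 : ℝ)), (p.2 : AddCircle (1 : ℝ)))

/-- The covering projection from the vertical annulus to the torus. -/
def annProj : VertAnnulus → Torus := fun p => (p.1, (p.2 : AddCircle (1 : ℝ)))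

/-- A homeomorphism is (topologically) transitive if it has a dense orbit. -/
def IsTransitive {X : Type*} [TopologicalSpace X] (f : X ≃ₜ X) : Prop :=
  ∃ z : X, Dense (Set.range fun n : ℤ => (f ^ n) z)

/-- `g` and `h` are isotopic: there is a continuous path of homeomorphisms
joining `h` (at time 0) to `g` (at time 1). -/
def Isotopic {X : Type*} [TopologicalSpace X] (g h : X → X) : Prop :=
  ∃ H : ℝ → X → X, Continuous (fun p : ℝ × X => H p.1 p.2) ∧
    (∀ t : ℝ, ∃ e : X ≃ₜ X, H t = ⇑e) ∧ H 0 = h ∧ H 1 = g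

/-- The Bernoulli shift on `Σ = {0,…,r−1}^ℤ`. -/
def bernoulliShift (r : ℕ) : (ℤ → Fin r) → (ℤ → Fin r) := fun s i => s (i + 1)

/-- `Δ` is a topological horseshoe for the homeomorphism `f`. -/
def IsTopologicalHorseshoe {X : Type*} [TopologicalSpace X] (f : X ≃ₜ X) (Δ : Set X) : Prop :=
  IsCompact Δ ∧
  ∃ q : ℕ, 1 ≤ q ∧ ⇑(f ^ q) '' Δ = Δ ∧
    ∃ (Y : Type) (_ : TopologicalSpace Y) (_ : CompactSpace Y) (_ : T2Space Y)
      (g : Y → Y) (r : ℕ) (π₁ : Y → X) (π₂ : Y → (ℤ → Fin r)),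
      2 ≤ r ∧ Continuous g ∧
      Continuous π₁ ∧ Set.range π₁ = Δ ∧ (∀ y, π₁ (g y) = (f ^ q) (π₁ y)) ∧
      (∃ B : ℕ, ∀ x : X, (π₁ ⁻¹' {x}).Finite ∧ (π₁ ⁻¹' {x}).ncard ≤ B) ∧
      Continuous π₂ ∧ Function.Surjective π₂ ∧
      (∀ y, π₂ (g y) = bernoulliShift r (π₂ y)) ∧
      (∀ (n : ℕ) (s : ℤ → Fin r), (bernoulliShift r)^[n] s = s →
        ∃ y : Y, π₂ y = s ∧ g^[n] y = y)

/-- `f` has a topological horseshoe. -/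
def HasTopologicalHorseshoe {X : Type*} [TopologicalSpace X] (f : X ≃ₜ X) : Prop :=
  ∃ Δ : Set X, IsTopologicalHorseshoe f Δ

/-- The ω-limit set `ω_f(z) = ⋂_{k≥0} closure {f^n(z) : n ≥ k}`. -/
def omegaLimitOf {X : Type*} [TopologicalSpace X] (f : X → X) (z : X) : Set X :=
  ⋂ k : ℕ, closure ((fun n : ℕ => f^[n] z) '' Set.Ici k)

/-- The α-limit set `α_f(z) = ⋂_{k≤0} closure {f^n(z) : n ≤ k}` of a homeomorphism,
i.e. the ω-limit set of the inverse homeomorphism. -/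
def alphaLimitOf {X : Type*} [TopologicalSpace X] (f : X ≃ₜ X) (z : X) : Set X :=
  omegaLimitOf (⇑f.symm) z

/-- `G` is a lift of the torus homeomorphism `g` to the plane. -/
def IsLiftR2 (g : Torus ≃ₜ Torus) (G : (ℝ × ℝ) ≃ₜ (ℝ × ℝ)) : Prop :=
  ∀ p : ℝ × ℝ, torusProj (G p) = g (torusProj p)

/-- `H` is a lift of the torus homeomorphism `g` to the vertical annulus. -/
def IsLiftAnn (g : Torus ≃ₜ Torus) (H : VertAnnulus ≃ₜ VertAnnulus) : Prop :=
  ∀ p : VertAnnulus, annProj (H p) = g (annProj p)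

/-- The Misiurewicz–Ziemian rotation set of a lift `G` of a torus homeomorphism:
all limits of sequences `(G^{n_k}(z_k) − z_k)/n_k` with `n_k → ∞`. -/
def rotSet (G : (ℝ × ℝ) ≃ₜ (ℝ × ℝ)) : Set (ℝ × ℝ) :=
  {v | ∃ (n : ℕ → ℕ) (z : ℕ → ℝ × ℝ), StrictMono n ∧
    Filter.Tendsto (fun k => ((n k : ℝ))⁻¹ • ((G ^ (n k)) (z k) - z k))
      Filter.atTop (nhds v)}

/-- A set is a non-degenerate line segment with rational slope: it is a segment with
distinct endpoints whose direction is a real multiple of a nonzero integer vector. -/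
def IsRationalSlopeSegment (ρ : Set (ℝ × ℝ)) : Prop :=
  ∃ a b : ℝ × ℝ, a ≠ b ∧ ρ = segment ℝ a b ∧
    ∃ v : ℤ × ℤ, v ≠ (0, 0) ∧ ∃ t : ℝ, b - a = t • (((v.1 : ℝ), (v.2 : ℝ)) : ℝ × ℝ)

/-- A set is a non-degenerate horizontal segment (direction `±(1,0)`). -/
def IsHorizontalSegment (ρ : Set (ℝ × ℝ)) : Prop :=
  ∃ a b : ℝ × ℝ, a ≠ b ∧ ρ = segment ℝ a b ∧ a.2 = b.2

/-- The linear torus map induced by an integer matrix. -/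
def matrixTorusMap (A : Matrix (Fin 2) (Fin 2) ℤ) : Torus → Torus :=
  fun p => (A 0 0 • p.1 + A 0 1 • p.2, A 1 0 • p.1 + A 1 1 • p.2)

/-- The linear planar map induced by an integer matrix. -/
def matMap (A : Matrix (Fin 2) (Fin 2) ℤ) : ℝ × ℝ → ℝ × ℝ :=
  fun p => ((A 0 0 : ℝ) * p.1 + (A 0 1 : ℝ) * p.2, (A 1 0 : ℝ) * p.1 + (A 1 1 : ℝ) * p.2)

/-- `g` is isotopic to a Dehn twist: it is isotopic to the linear map induced by a matrix
`A ∈ GL(2,ℤ)` conjugate (in GL(2,ℤ)) to `[[1, m], [0, 1]]` for some `m ≠ 0`. -/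
def IsotopicToDehnTwist (g : Torus ≃ₜ Torus) : Prop :=
  ∃ (m : ℤ) (A P : Matrix (Fin 2) (Fin 2) ℤ), m ≠ 0 ∧ IsUnit A.det ∧ IsUnit P.det ∧
    A * P = P * !![1, m; 0, 1] ∧ Isotopic (⇑g) (matrixTorusMap A)

/-- The vertical rotation set of an annulus homeomorphism `H`:
`ρ_V(H) = ⋂_{k≥1} closure ( ⋃_{n≥k} { pr₂(Hⁿ(z) − z)/n : z ∈ A } )`. -/
def vertRotSet (H : VertAnnulus ≃ₜ VertAnnulus) : Set ℝ :=
  ⋂ k : ℕ, closure (⋃ n : ℕ, ⋃ _ : k + 1 ≤ n,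
    {x : ℝ | ∃ z : VertAnnulus, x = (((H ^ n) z).2 - z.2) / n})

/-- `z` is a non-wandering point of `f`. -/
def IsNonWanderingPt {X : Type*} [TopologicalSpace X] (f : X → X) (z : X) : Prop :=
  ∀ U ∈ 𝓝 z, ∃ n : ℕ, 1 ≤ n ∧ (f^[n] '' U ∩ U).Nonempty

/-- The Euclidean inner product on `ℝ²`. -/
def dot2 (u v : ℝ × ℝ) : ℝ := u.1 * v.1 + u.2 * v.2

/-- The Euclidean normalization of a vector of `ℝ²`. -/
def normalize2 (u : ℝ × ℝ) : ℝ × ℝ := (Real.sqrt (u.1 ^ 2 + u.2 ^ 2))⁻¹ • u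

/-- There is a Birkhoff connection from `z₁` to `z₂` for `f`. -/
def BirkhoffConnection {X : Type*} [TopologicalSpace X] (f : X → X) (z₁ z₂ : X) : Prop :=
  ∀ W₁ ∈ 𝓝 z₁, ∀ W₂ ∈ 𝓝 z₂, ∃ n : ℕ, 1 ≤ n ∧ (W₁ ∩ f^[n] ⁻¹' W₂).Nonempty

/-- `c : ℤ/pℤ → X` is a Birkhoff cycle for `f`. -/
def IsBirkhoffCycle {X : Type*} [TopologicalSpace X] (f : X → X) {p : ℕ} (c : ZMod p → X) :
    Prop :=
  0 < p ∧ ∀ i : ZMod p, BirkhoffConnection f (c i) (c (i + 1))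

lemma vert_bound_aux (K : Set VertAnnulus) (M₀ : ℝ) (hM₀ : 0 < M₀)
    (hKsub : K ⊆ {p : VertAnnulus | |p.2| ≤ M₀})
    (hsep : ∀ p q : VertAnnulus, M₀ < p.2 → q.2 < -M₀ →
      connectedComponentIn Kᶜ p ≠ connectedComponentIn Kᶜ q)
    (G : VertAnnulus ≃ₜ VertAnnulus)
    (hcomm : ∀ (w : VertAnnulus) (p : ℤ), G (w + (0, (p : ℝ))) = G w + (0, (p : ℝ)))
    (hGK : ⇑G '' K = K) :
    ∀ w : VertAnnulus, |(G w).2 - w.2| < 2 * M₀ + 3 := by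
  classical
  set ψ : VertAnnulus → ℝ := fun w => (G w).2 - w.2 with hψdef
  have hψper : ∀ (w : VertAnnulus) (p : ℤ), ψ (w + (0, (p : ℝ))) = ψ w := by
    intro w p
    simp only [hψdef, hcomm w p, Prod.snd_add]
    ring
  have hψcont : Continuous ψ := (continuous_snd.comp G.continuous).sub continuous_snd
  obtain ⟨z, hz, hmax⟩ := ((isCompact_univ.prod isCompact_Icc) :
      IsCompact ((univ : Set (AddCircle (1:ℝ))) ×ˢ Icc (0:ℝ) 1)).exists_isMaxOn
    ⟨(0, 0), by simp⟩ (hψcont.abs.continuousOn)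
  set C := |ψ z| with hC
  have hC0 : 0 ≤ C := abs_nonneg _
  have hCb : ∀ w : VertAnnulus, |ψ w| ≤ C := by
    intro w
    have hmem : w + (0, ((-⌊w.2⌋ : ℤ) : ℝ)) ∈
        (univ : Set (AddCircle (1:ℝ))) ×ˢ Icc (0:ℝ) 1 := by
      constructor
      · trivial
      · have h1 := Int.fract_nonneg w.2
        have h2 := (Int.fract_lt_one w.2).le
        have : (w + (0, ((-⌊w.2⌋ : ℤ) : ℝ))).2 = Int.fract w.2 := by
          rw [Prod.snd_add, Int.fract]
          push_cast
          ring
        rw [this]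
        exact ⟨h1, h2⟩
    have h3 : |ψ (w + (0, ((-⌊w.2⌋ : ℤ) : ℝ)))| ≤ C := hmax hmem
    rwa [hψper w (-⌊w.2⌋)] at h3
  -- the two ends
  have hne : ∀ p : VertAnnulus, M₀ < p.2 → p ∈ Kᶜ := by
    intro p hp hpK
    have := hKsub hpK
    simp only [mem_setOf_eq] at this
    have := le_abs_self p.2
    linarith [abs_nonneg p.2, (hKsub hpK : |p.2| ≤ M₀)]
  have hne' : ∀ p : VertAnnulus, p.2 < -M₀ → p ∈ Kᶜ := by
    intro p hp hpK
    have h1 : |p.2| ≤ M₀ := hKsub hpK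
    have := neg_abs_le p.2
    linarith
  set Stop : Set VertAnnulus := {p | M₀ < p.2} with hStop
  set Sbot : Set VertAnnulus := {p | p.2 < -M₀} with hSbot
  have hStopConn : IsConnected Stop := by
    have : Stop = (univ : Set (AddCircle (1:ℝ))) ×ˢ Ioi M₀ := by
      ext p; simp [hStop, Set.mem_prod]
    rw [this]
    exact isConnected_univ.prod isConnected_Ioi
  have hSbotConn : IsConnected Sbot := by
    have : Sbot = (univ : Set (AddCircle (1:ℝ))) ×ˢ Iio (-M₀) := by
      ext p; simp [hSbot, Set.mem_prod]
    rw [this]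
    exact isConnected_univ.prod isConnected_Iio
  set wtop : VertAnnulus := (0, M₀ + C + 1) with hwtopdef
  set wbot : VertAnnulus := (0, -(M₀ + C + 1)) with hwbotdef
  have hwtop : wtop ∈ Stop := by simp [hStop, hwtopdef]; linarith
  have hwbot : wbot ∈ Sbot := by simp [hSbot, hwbotdef]; linarith
  set U := connectedComponentIn Kᶜ wtop with hU
  set L := connectedComponentIn Kᶜ wbot with hL
  have hStopU : Stop ⊆ U :=
    hStopConn.isPreconnected.subset_connectedComponentIn hwtop (fun p hp => hne p hp)
  have hSbotL : Sbot ⊆ L :=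
    hSbotConn.isPreconnected.subset_connectedComponentIn hwbot (fun p hp => hne' p hp)
  have hUL : U ≠ L := hsep wtop wbot (by simpa [hStop] using hwtop) (by simpa [hSbot] using hwbot)
  have hGF : ⇑G '' Kᶜ = Kᶜ := by rw [Set.image_compl_eq G.bijective, hGK]
  -- invariance of the two end components
  have himg : ∀ w₀ : VertAnnulus, w₀ ∈ Kᶜ → ∀ S : Set VertAnnulus,
      S = connectedComponentIn Kᶜ w₀ → G w₀ ∈ S → ⇑G '' S ⊆ S := by
    intro w₀ hw₀ S hSdef hGw₀
    have hSconn : IsConnected S := hSdef ▸ isConnected_connectedComponentIn_iff.2 hw₀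
    have h1 : ⇑G '' S ⊆ connectedComponentIn Kᶜ (G w₀) := by
      refine (hSconn.image _ G.continuous.continuousOn).isPreconnected.subset_connectedComponentIn
        ⟨w₀, hSdef ▸ mem_connectedComponentIn hw₀, rfl⟩ ?_
      rw [← hGF]
      exact Set.image_mono (hSdef ▸ connectedComponentIn_subset Kᶜ w₀)
    have h2 : connectedComponentIn Kᶜ (G w₀) = S := by
      rw [hSdef]
      exact (connectedComponentIn_eq (hSdef ▸ hGw₀)).symm
    rwa [h2] at h1
  have hGwtop : G wtop ∈ Stop := by
    have := hCb wtop
    have h1 : -C ≤ ψ wtop := (abs_le.1 this).1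
    simp only [hStop, mem_setOf_eq]
    have : (G wtop).2 - wtop.2 = ψ wtop := rfl
    have hw2 : wtop.2 = M₀ + C + 1 := rfl
    linarith
  have hGwbot : G wbot ∈ Sbot := by
    have := hCb wbot
    have h1 : ψ wbot ≤ C := (abs_le.1 this).2
    simp only [hSbot, mem_setOf_eq]
    have : (G wbot).2 - wbot.2 = ψ wbot := rfl
    have hw2 : wbot.2 = -(M₀ + C + 1) := rfl
    linarith
  have hGU : ⇑G '' U ⊆ U := himg wtop (hne wtop (by simpa [hStop] using hwtop)) U hU (hStopU hGwtop)
  have hGL : ⇑G '' L ⊆ L := himg wbot (hne' wbot (by simpa [hSbot] using hwbot)) L hL (hSbotL hGwbot)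
  have claimA : ∀ w : VertAnnulus, M₀ < w.2 → -M₀ ≤ (G w).2 := by
    intro w hw
    by_contra h
    push_neg at h
    have h1 : G w ∈ U := hGU ⟨w, hStopU hw, rfl⟩
    have h2 : G w ∈ L := hSbotL h
    exact hUL ((connectedComponentIn_eq h1).trans (connectedComponentIn_eq h2).symm)
  have claimB : ∀ w : VertAnnulus, w.2 < -M₀ → (G w).2 ≤ M₀ := by
    intro w hw
    by_contra h
    push_neg at h
    have h1 : G w ∈ L := hGL ⟨w, hSbotL hw, rfl⟩
    have h2 : G w ∈ U := hStopU h
    exact hUL ((connectedComponentIn_eq h2).trans (connectedComponentIn_eq h1).symm)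
  -- conclusion
  intro w
  set a : ℤ := ⌊w.2 - M₀⌋ - 1 with ha
  have ha1 : (a : ℝ) ≤ w.2 - M₀ - 1 := by
    push_cast [ha]
    linarith [Int.floor_le (w.2 - M₀)]
  have ha2 : w.2 - M₀ - 2 < (a : ℝ) := by
    push_cast [ha]
    linarith [Int.lt_floor_add_one (w.2 - M₀)]
  set b : ℤ := ⌈w.2 + M₀⌉ + 1 with hb
  have hb1 : w.2 + M₀ + 1 ≤ (b : ℝ) := by
    push_cast [hb]
    linarith [Int.le_ceil (w.2 + M₀)]
  have hb2 : (b : ℝ) < w.2 + M₀ + 2 := by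
    push_cast [hb]
    linarith [Int.ceil_lt_add_one (w.2 + M₀)]
  have hlow : -M₀ ≤ (G w).2 - a := by
    have hmem : M₀ < (w + (0, ((-a : ℤ) : ℝ))).2 := by
      simp only [Prod.snd_add]
      push_cast
      linarith
    have := claimA _ hmem
    rwa [hcomm w (-a), Prod.snd_add, Int.cast_neg] at this
  have hhigh : (G w).2 - b ≤ M₀ := by
    have hmem : (w + (0, ((-b : ℤ) : ℝ))).2 < -M₀ := by
      simp only [Prod.snd_add]
      push_cast
      linarith
    have := claimB _ hmem
    rwa [hcomm w (-b), Prod.snd_add, Int.cast_neg] at this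
  rw [abs_lt]
  constructor <;> linarith

/-- An annulus homeomorphism commuting with vertical integer translations and preserving a
compact connected set separating the two ends of the annulus has uniformly bounded vertical
displacements. -/
theorem statement13 (H : VertAnnulus ≃ₜ VertAnnulus)
    (hcomm : ∀ (w : VertAnnulus) (p : ℤ), H (w + (0, (p : ℝ))) = H w + (0, (p : ℝ)))
    (K : Set VertAnnulus) (hKc : IsCompact K) (hKconn : IsConnected K) (hKinv : ⇑H '' K = K)
    (M₀ : ℝ) (hM₀ : 0 < M₀) (hKsub : K ⊆ {p : VertAnnulus | |p.2| ≤ M₀})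
    (hsep : ∀ p q : VertAnnulus, M₀ < p.2 → q.2 < -M₀ →
      connectedComponentIn Kᶜ p ≠ connectedComponentIn Kᶜ q) :
    ∃ M' : ℝ, 0 < M' ∧ ∀ (w : VertAnnulus) (n : ℤ), |((H ^ n) w).2 - w.2| < M' := by
  have hcomms : ∀ (w : VertAnnulus) (p : ℤ),
      H.symm (w + (0, (p : ℝ))) = H.symm w + (0, (p : ℝ)) := by
    intro w p
    apply H.injective
    rw [H.apply_symm_apply, hcomm, H.apply_symm_apply]
  have hKsymm : ⇑H.symm '' K = K := by
    conv_lhs => rw [← hKinv]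
    rw [← Set.image_comp]
    simp [Function.comp_def]
  have hcommn : ∀ n : ℤ, ∀ (w : VertAnnulus) (p : ℤ),
      (H ^ n) (w + (0, (p : ℝ))) = (H ^ n) w + (0, (p : ℝ)) := by
    intro n
    induction n using Int.induction_on with
    | zero => intro w p; rfl
    | succ i ih =>
      intro w p
      have e : ∀ x : VertAnnulus, (H ^ ((i : ℤ) + 1)) x = (H ^ (i : ℤ)) (H x) := by
        intro x; rw [zpow_add_one]; rfl
      rw [e, hcomm, ih, ← e]
    | pred i ih =>
      intro w p
      have e : ∀ x : VertAnnulus, (H ^ (-(i : ℤ) - 1)) x = (H ^ (-(i : ℤ))) (H.symm x) := by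
        intro x; rw [zpow_sub_one]; rfl
      rw [e, hcomms, ih, ← e]
  have hKn : ∀ n : ℤ, ⇑(H ^ n) '' K = K := by
    intro n
    induction n using Int.induction_on with
    | zero =>
      have e : ⇑(H ^ (0 : ℤ)) = fun x => x := rfl
      rw [e, Set.image_id']
    | succ i ih =>
      have e : ⇑(H ^ ((i : ℤ) + 1)) = ⇑(H ^ (i : ℤ)) ∘ ⇑H := by
        rw [zpow_add_one]; rfl
      rw [e, Set.image_comp, hKinv, ih]
    | pred i ih =>
      have e : ⇑(H ^ (-(i : ℤ) - 1)) = ⇑(H ^ (-(i : ℤ))) ∘ ⇑H.symm := by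
        rw [zpow_sub_one]; rfl
      rw [e, Set.image_comp, hKsymm, ih]
  refine ⟨2 * M₀ + 3, by linarith, fun w n => ?_⟩
  exact vert_bound_aux K M₀ hM₀ hKsub hsep (H ^ n) (hcommn n) (hKn n) w
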